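/- If the deviation vector norm grows linearly, ‖v_k‖ = ‖v₀‖(1 + αk) with α > 0 (regular orbit), then the MEGNO Y(n) = (2/n) Σ_{k=1}^n k·ln(‖v_k‖/‖v_{k-1}‖) converges to 2 as n → ∞. -/

import Mathlib

open Filter

/-- For a regular orbit whose deviation vector norm grows linearly,
`‖v_k‖ = ‖v₀‖(1 + α k)` with `α > 0`, the MEGNO
`Y(n) = (2/n) Σ_{k=1}^n k · ln(‖v_k‖/‖v_{k-1}‖)` converges to `2` as `n → ∞`. -/
theorem megno_regular_limit {E : Type*} [NormedAddCommGroup E]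
    (v : ℕ → E) (hv0 : v 0 ≠ 0) (α : ℝ) (hα : 0 < α)
    (hlin : ∀ k : ℕ, ‖v k‖ = ‖v 0‖ * (1 + α * k))
    (Y : ℕ → ℝ)
    (hY : ∀ n, Y n = (2 / (n : ℝ)) * ∑ k ∈ Finset.Icc 1 n,
        (k : ℝ) * Real.log (‖v k‖ / ‖v (k-1)‖)) :
    Tendsto Y atTop (nhds 2) := by
  have hv0' : ‖v 0‖ ≠ 0 := norm_ne_zero_iff.mpr hv0
  have hpos : ∀ i : ℕ, (0:ℝ) < 1 + α * i := fun i => by positivity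
  set x : ℕ → ℝ := fun i => α / (1 + α * i) with hx
  have hxpos : ∀ i, 0 < x i := fun i => div_pos hα (hpos i)
  have hxne : ∀ i, x i ≠ 0 := fun i => (hxpos i).ne'
  -- the summand
  set u : ℕ → ℝ := fun i => ((i:ℝ)+1) * Real.log (‖v (i+1)‖ / ‖v i‖) with hu
  have hratio : ∀ i : ℕ, ‖v (i+1)‖ / ‖v i‖ = 1 + x i := by
    intro i
    rw [hlin (i+1), hlin i, hx]
    push_cast
    field_simp
    ring
  -- u i = ((i+1) * x i) * (log (1 + x i) / x i)
  have huform : ∀ i : ℕ, u i = (((i:ℝ)+1) * x i) * (Real.log (1 + x i) / x i) := by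
    intro i
    rw [hu]
    simp only [hratio i]
    field_simp
    rw [mul_comm (x i), mul_div_cancel_right₀ _ (hxne i)]
  -- limit of (i+1) * x i is 1
  have h1 : Tendsto (fun i : ℕ => ((i:ℝ)+1) * x i) atTop (nhds 1) := by
    have heq : ∀ i : ℕ, ((i:ℝ)+1) * x i = 1 + (α - 1) / (1 + α * i) := by
      intro i
      rw [hx]
      field_simp
      ring
    simp only [heq]
    have hden : Tendsto (fun i : ℕ => 1 + α * (i:ℝ)) atTop atTop := by
      apply tendsto_atTop_add_const_left
      exact (tendsto_natCast_atTop_atTop).const_mul_atTop hα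
    have h0 : Tendsto (fun i : ℕ => (α - 1) / (1 + α * (i:ℝ))) atTop (nhds 0) :=
      Tendsto.div_atTop tendsto_const_nhds hden
    have : Tendsto (fun i : ℕ => 1 + (α - 1) / (1 + α * (i:ℝ))) atTop (nhds (1 + 0)) :=
      tendsto_const_nhds.add h0
    simpa using this
  -- x i tends to 0
  have hx0 : Tendsto x atTop (nhds 0) := by
    have hden : Tendsto (fun i : ℕ => 1 + α * (i:ℝ)) atTop atTop := by
      apply tendsto_atTop_add_const_left
      exact (tendsto_natCast_atTop_atTop).const_mul_atTop hα
    exact Tendsto.div_atTop tendsto_const_nhds hden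
  -- log(1+t)/t → 1 as t → 0, t ≠ 0
  have hslope : Tendsto (fun t : ℝ => Real.log (1 + t) / t) (nhdsWithin 0 {(0:ℝ)}ᶜ) (nhds 1) := by
    have hd : HasDerivAt (fun t : ℝ => Real.log (1 + t)) 1 0 := by
      have h0 : HasDerivAt (fun t : ℝ => 1 + t) 1 0 := by
        simpa using (hasDerivAt_id (0:ℝ)).const_add 1
      have := h0.log (by norm_num)
      simpa using this
    have := hasDerivAt_iff_tendsto_slope.mp hd
    refine this.congr' ?_
    filter_upwards [self_mem_nhdsWithin] with t ht
    simp [slope_def_field]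
  have hxW : Tendsto x atTop (nhdsWithin 0 {(0:ℝ)}ᶜ) := by
    apply tendsto_nhdsWithin_of_tendsto_nhds_of_eventually_within _ hx0
    exact Eventually.of_forall fun i => hxne i
  have h2 : Tendsto (fun i : ℕ => Real.log (1 + x i) / x i) atTop (nhds 1) :=
    hslope.comp hxW
  have hu1 : Tendsto u atTop (nhds 1) := by
    have := h1.mul h2
    rw [one_mul] at this
    refine this.congr ?_
    intro i
    exact (huform i).symm
  -- Cesàro
  have hces : Tendsto (fun n : ℕ => (n:ℝ)⁻¹ • ∑ i ∈ Finset.range n, u i) atTop (nhds 1) :=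
    hu1.cesaro
  have hYeq : ∀ n : ℕ, Y n = 2 * ((n:ℝ)⁻¹ • ∑ i ∈ Finset.range n, u i) := by
    intro n
    rw [hY n]
    have hsum : ∑ k ∈ Finset.Icc 1 n, (k : ℝ) * Real.log (‖v k‖ / ‖v (k-1)‖)
        = ∑ i ∈ Finset.range n, u i := by
      rw [← Finset.Ico_add_one_right_eq_Icc, Finset.sum_Ico_eq_sum_range]
      simp only [hu, Nat.add_sub_cancel]
      apply Finset.sum_congr (by simp)
      intro i _
      norm_num [add_comm 1 i, add_comm (1:ℝ)]
    rw [hsum, smul_eq_mul, div_eq_mul_inv]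
    ring
  have : Tendsto (fun n : ℕ => 2 * ((n:ℝ)⁻¹ • ∑ i ∈ Finset.range n, u i)) atTop (nhds 2) := by
    have := hces.const_mul 2
    simpa using this
  exact this.congr fun n => (hYeq n).symm
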